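/- Let A be a d×m matrix of nonnegative integers and F ⊆ {1,...,m}. If there exists a vector x in the nonnegative toric variety X_A whose support is exactly F, then F is facial for A: there exists c ∈ ℝ^d with cᵀa_i = 0 for all i ∈ F and cᵀa_i ≥ 1 for all i ∉ F. -/

import Mathlib

open Finset

def dotQ {d : ℕ} (x y : Fin d → ℚ) : ℚ := ∑ k, x k * y k

lemma dotQ_sub_left {d : ℕ} (x y z : Fin d → ℚ) :
    dotQ (x - y) z = dotQ x z - dotQ y z := by
  simp [dotQ, sub_mul, Finset.sum_sub_distrib]

lemma dotQ_smul_left {d : ℕ} (r : ℚ) (x z : Fin d → ℚ) :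
    dotQ (r • x) z = r * dotQ x z := by
  simp [dotQ, Finset.mul_sum, mul_assoc]

lemma dotQ_sub_right {d : ℕ} (x y z : Fin d → ℚ) :
    dotQ x (y - z) = dotQ x y - dotQ x z := by
  simp [dotQ, mul_sub, Finset.sum_sub_distrib]

lemma dotQ_smul_right {d : ℕ} (r : ℚ) (x z : Fin d → ℚ) :
    dotQ x (r • z) = r * dotQ x z := by
  simp only [dotQ, Finset.mul_sum, Pi.smul_apply, smul_eq_mul]
  exact Finset.sum_congr rfl fun k _ => by ring

lemma dotQ_self_pos {d : ℕ} {b : Fin d → ℚ} (hb : b ≠ 0) : 0 < dotQ b b := by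
  have : ∃ k, b k ≠ 0 := by
    by_contra h; push_neg at h; exact hb (funext h)
  obtain ⟨k, hk⟩ := this
  refine Finset.sum_pos' (fun i _ => mul_self_nonneg _) ⟨k, Finset.mem_univ k, ?_⟩
  exact mul_self_pos.mpr hk

/-- Farkas' lemma over ℚ for finitely many generators. -/
lemma farkasQ {d : ℕ} {ι : Type} [DecidableEq ι] (s : Finset ι) (v : ι → (Fin d → ℚ))
    (b : Fin d → ℚ) :
    (∃ f : ι → ℚ, (∀ i, 0 ≤ f i) ∧ b = ∑ i ∈ s, f i • v i) ∨
    (∃ c : Fin d → ℚ, (∀ i ∈ s, 0 ≤ dotQ c (v i)) ∧ dotQ c b < 0) := by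
  suffices H : ∀ (n : ℕ) (s : Finset ι) (v : ι → (Fin d → ℚ)) (b : Fin d → ℚ),
      s.card = n →
      (∃ f : ι → ℚ, (∀ i, 0 ≤ f i) ∧ b = ∑ i ∈ s, f i • v i) ∨
      (∃ c : Fin d → ℚ, (∀ i ∈ s, 0 ≤ dotQ c (v i)) ∧ dotQ c b < 0) by
    exact H s.card s v b rfl
  intro n
  induction n using Nat.strong_induction_on with
  | _ n ih =>
  intro s v b hn
  rcases s.eq_empty_or_nonempty with rfl | ⟨a, ha⟩
  · by_cases hb : b = 0
    · exact Or.inl ⟨0, fun i => le_refl 0, by simp [hb]⟩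
    · refine Or.inr ⟨-b, by simp, ?_⟩
      have := dotQ_self_pos hb
      have : dotQ (-b) b = - dotQ b b := by simp [dotQ]
      rw [this]; linarith [dotQ_self_pos hb]
  · set t := s.erase a with hts
    have hat : a ∉ t := Finset.notMem_erase a s
    have hins : insert a t = s := Finset.insert_erase ha
    have htc : t.card < n := by
      rw [← hn]; exact Finset.card_erase_lt_of_mem ha
    -- first application of IH
    rcases ih t.card htc t v b rfl with ⟨f, hf, hb⟩ | ⟨c, hc, hcb⟩
    · -- b in cone of t ⊆ cone of s
      refine Or.inl ⟨fun i => if i = a then 0 else f i, fun i => ?_, ?_⟩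
      · dsimp only; split
        · exact le_refl 0
        · exact hf i
      rw [← hins, Finset.sum_insert hat]
      dsimp only
      rw [if_pos rfl, zero_smul, zero_add, hb]
      exact Finset.sum_congr rfl fun i hi => by
        rw [if_neg (Finset.ne_of_mem_erase hi)]
    · by_cases hca : 0 ≤ dotQ c (v a)
      · refine Or.inr ⟨c, fun i hi => ?_, hcb⟩
        rcases eq_or_ne i a with rfl | hia
        · exact hca
        · exact hc i (Finset.mem_erase.mpr ⟨hia, hi⟩)
      · push_neg at hca
        have hcane : dotQ c (v a) ≠ 0 := ne_of_lt hca
        -- projection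
        set π : (Fin d → ℚ) → (Fin d → ℚ) :=
          fun w => w - (dotQ c w / dotQ c (v a)) • v a with hπ
        have hdotπ : ∀ (c' w : Fin d → ℚ),
            dotQ c' (π w) = dotQ c' w - (dotQ c' (v a) / dotQ c (v a)) * dotQ c w := by
          intro c' w
          rw [hπ]; simp only
          rw [dotQ_sub_right, dotQ_smul_right]
          ring
        rcases ih t.card htc t (fun i => π (v i)) (π b) rfl with
          ⟨f, hf, hb'⟩ | ⟨c', hc', hcb'⟩
        · -- reconstruct cone membership for b
          set μ : ℚ := dotQ c b / dotQ c (v a) with hμ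
          have hμpos : 0 < μ := div_pos_of_neg_of_neg hcb hca
          set r : ι → ℚ := fun i => dotQ c (v i) / dotQ c (v a) with hr
          have hrnp : ∀ i ∈ t, r i ≤ 0 := fun i hi =>
            div_nonpos_of_nonneg_of_nonpos (hc i hi) (le_of_lt hca)
          have hsum : ∑ i ∈ t, f i * r i ≤ 0 :=
            Finset.sum_nonpos fun i hi => mul_nonpos_of_nonneg_of_nonpos (hf i) (hrnp i hi)
          refine Or.inl ⟨fun i => if i = a then μ - ∑ j ∈ t, f j * r j
            else if i ∈ t then f i else 0, fun i => ?_, ?_⟩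
          · dsimp only
            split
            · linarith
            · split
              · exact hf i
              · exact le_refl 0
          · rw [← hins, Finset.sum_insert hat]
            dsimp only
            rw [if_pos rfl]
            have hterm : ∀ i ∈ t, (if i = a then μ - ∑ j ∈ t, f j * r j
                else if i ∈ t then f i else 0) • v i = f i • v i := by
              intro i hi
              have hne : i ≠ a := fun h => hat (by rw [← h]; exact hi)
              rw [if_neg hne, if_pos hi]
            rw [Finset.sum_congr rfl hterm]
            -- from hb' : π b = ∑ i in t, f i • π (v i)
            have expand : ∑ i ∈ t, f i • π (v i)
                = ∑ i ∈ t, f i • v i - (∑ i ∈ t, f i * r i) • v a := by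
              rw [Finset.sum_smul]
              rw [← Finset.sum_sub_distrib]
              refine Finset.sum_congr rfl fun i hi => ?_
              rw [hπ]; simp only
              rw [smul_sub, smul_smul, hr]
            have hb2 : b - μ • v a = ∑ i ∈ t, f i • v i - (∑ i ∈ t, f i * r i) • v a := by
              rw [← expand, ← hb']
            have : b = (μ - ∑ i ∈ t, f i * r i) • v a + ∑ i ∈ t, f i • v i := by
              rw [sub_smul]
              abel_nf
              abel_nf at hb2
              linear_combination (norm := abel) hb2
            exact this
        · -- build new separating vector
          set ρ : ℚ := dotQ c' (v a) / dotQ c (v a) with hρ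
          set c₂ : Fin d → ℚ := c' - ρ • c with hc₂
          have hdot₂ : ∀ w, dotQ c₂ w = dotQ c' w - ρ * dotQ c w := by
            intro w; rw [hc₂, dotQ_sub_left, dotQ_smul_left]
          refine Or.inr ⟨c₂, fun i hi => ?_, ?_⟩
          · rcases eq_or_ne i a with rfl | hia
            · rw [hdot₂, hρ, div_mul_cancel₀ _ hcane, sub_self]
            · have hi' : i ∈ t := Finset.mem_erase.mpr ⟨hia, hi⟩
              have := hc' i hi'
              rw [hdotπ c' (v i)] at this
              rw [hdot₂]
              have heq : dotQ c' (v a) / dotQ c (v a) * dotQ c (v i) = ρ * dotQ c (v i) := by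
                rw [hρ]
              linarith [this]
          · rw [hdot₂]
            have := hcb'
            rw [hdotπ c' b] at this
            linarith


lemma exists_nat_mul {m : ℕ} (q : Fin m → ℚ) (hq : ∀ i, 0 ≤ q i) :
    ∃ N : ℕ, 0 < N ∧ ∃ u : Fin m → ℕ, ∀ i, (u i : ℚ) = N * q i := by
  refine ⟨∏ i, (q i).den, Finset.prod_pos fun i _ => (q i).pos, ?_⟩
  have key : ∀ i : Fin m, ∃ n : ℕ, (n : ℚ) = (∏ j, (q j).den) * q i := by
    intro i
    obtain ⟨k, hk⟩ := Finset.dvd_prod_of_mem (fun j => (q j).den) (Finset.mem_univ i)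
    have hden : ((q i).den : ℚ) * q i = (q i).num := by
      rw [mul_comm]
      exact_mod_cast Rat.mul_den_eq_num (q i)
    have hz : ((∏ j, (q j).den : ℕ) : ℚ) * q i = ((k * (q i).num : ℤ) : ℚ) := by
      rw [hk]
      push_cast
      rw [mul_comm ((q i).den : ℚ) (k : ℚ), mul_assoc, hden]
    have hnn : (0 : ℚ) ≤ ((k * (q i).num : ℤ) : ℚ) := by
      rw [← hz]; exact mul_nonneg (by positivity) (hq i)
    refine ⟨(k * (q i).num).toNat, ?_⟩
    rw [hz]

    exact_mod_cast Int.toNat_of_nonneg (by exact_mod_cast hnn)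
  choose u hu using key
  exact ⟨u, hu⟩

lemma dotQ_neg_right' {d : ℕ} (x z : Fin d → ℚ) : dotQ x (-z) = - dotQ x z := by
  simp [dotQ]

/-- Lemma A.2, (c) ⇒ (a): If some vector in the nonnegative toric variety
`X_A` has support exactly `F`, then `F` is facial for `A`. -/
theorem support_in_toric_implies_facial {d m : ℕ} (A : Matrix (Fin d) (Fin m) ℕ)
    (F : Set (Fin m)) (x : Fin m → ℝ) (hx : ∀ j, 0 ≤ x j)
    (hsupp : ∀ j, x j ≠ 0 ↔ j ∈ F)
    (hX : ∀ u v : Fin m → ℕ, (∀ i, ∑ j, A i j * u j = ∑ j, A i j * v j) →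
      ∏ j, x j ^ u j = ∏ j, x j ^ v j) :
    ∃ c : Fin d → ℝ, (∀ i ∈ F, ∑ k, c k * (A k i : ℝ) = 0) ∧
      (∀ i ∉ F, 1 ≤ ∑ k, c k * (A k i : ℝ)) := by
  classical
  -- Step A: the combinatorial key property
  have key : ∀ u v : Fin m → ℕ, (∀ i, ∑ j, A i j * u j = ∑ j, A i j * v j) →
      (∀ j, v j ≠ 0 → j ∈ F) → ∀ j, u j ≠ 0 → j ∈ F := by
    intro u v hAuv hv j hj
    have hprod := hX u v hAuv
    have hpos : 0 < ∏ j, x j ^ v j := by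
      refine Finset.prod_pos fun i _ => ?_
      rcases Nat.eq_zero_or_pos (v i) with h0 | h0
      · simp [h0]
      · have hiF : i ∈ F := hv i (Nat.pos_iff_ne_zero.mp h0)
        have hxi : x i ≠ 0 := (hsupp i).mpr hiF
        exact pow_pos (lt_of_le_of_ne (hx i) (Ne.symm hxi)) _
    rw [← hprod] at hpos
    have hne : x j ^ u j ≠ 0 := by
      intro h0
      rw [Finset.prod_eq_zero (Finset.mem_univ j) h0] at hpos
      exact lt_irrefl 0 hpos
    have : x j ≠ 0 := fun h0 => hne (by rw [h0, zero_pow hj])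
    exact (hsupp j).mp this
  -- the columns of A as rational vectors
  set aQ : Fin m → (Fin d → ℚ) := fun i k => (A k i : ℚ) with haQ
  set Fs : Finset (Fin m) := Finset.univ.filter (· ∈ F) with hFs
  -- Step B: per-index certificate
  have hB : ∀ j0 : Fin m, ∃ c : Fin d → ℚ, j0 ∉ F →
      (∀ i ∈ F, dotQ c (aQ i) = 0) ∧ (∀ i, 0 ≤ dotQ c (aQ i)) ∧ 0 < dotQ c (aQ j0) := by
    intro j0
    by_cases hj0 : j0 ∈ F
    · exact ⟨0, fun h => absurd hj0 h⟩
    rcases farkasQ (Finset.univ.disjSum Fs) (Sum.elim aQ (fun i => -aQ i)) (-aQ j0) with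
      ⟨f, hf, hbeq⟩ | ⟨c, hc, hcb⟩
    · -- cone membership: derive a ℕ-witness contradicting `key`
      exfalso
      rw [Finset.sum_disjSum] at hbeq
      simp only [Sum.elim_inl, Sum.elim_inr] at hbeq
      set lam : Fin m → ℚ := fun i => f (Sum.inl i) + (if i = j0 then 1 else 0) with hlam
      set mu : Fin m → ℚ := fun i => if i ∈ Fs then f (Sum.inr i) else 0 with hmu
      have hlamnn : ∀ i, 0 ≤ lam i := by
        intro i; simp only [hlam]; have := hf (Sum.inl i); split <;> linarith
      have hmunn : ∀ i, 0 ≤ mu i := by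
        intro i; simp only [hmu]; split
        · exact hf (Sum.inr i)
        · exact le_refl 0
      have hcoord : ∀ k, ∑ i, lam i * (A k i : ℚ) = ∑ i, mu i * (A k i : ℚ) := by
        intro k
        have h1 := congrFun hbeq k
        simp only [Pi.add_apply, Pi.neg_apply, Finset.sum_apply, Pi.smul_apply,
          smul_eq_mul, haQ, mul_neg] at h1
        have hL : ∑ i, lam i * (A k i : ℚ)
            = (∑ i, f (Sum.inl i) * (A k i : ℚ)) + (A k j0 : ℚ) := by
          simp only [hlam, add_mul, Finset.sum_add_distrib, ite_mul, one_mul, zero_mul]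
          rw [Finset.sum_ite_eq' Finset.univ j0 (fun i => ((A k i : ℚ)))]
          simp
        have hR : ∑ i, mu i * (A k i : ℚ)
            = ∑ i ∈ Fs, f (Sum.inr i) * (A k i : ℚ) := by
          rw [hFs, Finset.sum_filter]
          refine Finset.sum_congr rfl fun i _ => ?_
          simp only [hmu, hFs, Finset.mem_filter, Finset.mem_univ, true_and, ite_mul, zero_mul]
        rw [hL, hR]
        rw [Finset.sum_neg_distrib] at h1
        linarith
      obtain ⟨N1, hN1, u1, hu1⟩ := exists_nat_mul lam hlamnn
      obtain ⟨N2, hN2, u2, hu2⟩ := exists_nat_mul mu hmunn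
      set u : Fin m → ℕ := fun i => N2 * u1 i with hud
      set v : Fin m → ℕ := fun i => N1 * u2 i with hvd
      have hu : ∀ j, ((u j : ℕ) : ℚ) = ((N1 * N2 : ℕ) : ℚ) * lam j := by
        intro j; simp only [hud]; push_cast [hu1 j]; ring
      have hv : ∀ j, ((v j : ℕ) : ℚ) = ((N1 * N2 : ℕ) : ℚ) * mu j := by
        intro j; simp only [hvd]; push_cast [hu2 j]; ring
      have hAuv : ∀ k, ∑ j, A k j * u j = ∑ j, A k j * v j := by
        intro k
        have hq : (∑ j, (A k j : ℚ) * (u j : ℚ)) = ∑ j, (A k j : ℚ) * (v j : ℚ) := by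
          calc (∑ j, (A k j : ℚ) * (u j : ℚ))
              = ((N1 * N2 : ℕ) : ℚ) * ∑ j, lam j * (A k j : ℚ) := by
                rw [Finset.mul_sum]
                exact Finset.sum_congr rfl fun j _ => by rw [hu j]; ring
            _ = ((N1 * N2 : ℕ) : ℚ) * ∑ j, mu j * (A k j : ℚ) := by rw [hcoord k]
            _ = ∑ j, (A k j : ℚ) * (v j : ℚ) := by
                rw [Finset.mul_sum]
                exact Finset.sum_congr rfl fun j _ => by rw [hv j]; ring
        exact_mod_cast hq
      have hvsupp : ∀ j, v j ≠ 0 → j ∈ F := by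
        intro j hvj
        have : mu j ≠ 0 := by
          intro h0
          apply hvj
          have : ((v j : ℕ) : ℚ) = 0 := by rw [hv j, h0, mul_zero]
          exact_mod_cast this
        have hjFs : j ∈ Fs := by
          by_contra hjn
          exact this (by simp [hmu, hjn])
        rw [hFs] at hjFs
        exact (Finset.mem_filter.mp hjFs).2
      have huj0 : u j0 ≠ 0 := by
        intro h0
        have h1 : ((u j0 : ℕ) : ℚ) = 0 := by rw [h0]; norm_num
        rw [hu j0] at h1
        have hl : (1 : ℚ) ≤ lam j0 := by
          have := hf (Sum.inl j0)
          simp [hlam]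
          linarith
        have hNpos : (0 : ℚ) < ((N1 * N2 : ℕ) : ℚ) := by
          exact_mod_cast Nat.mul_pos hN1 hN2
        nlinarith
      exact hj0 (key u v hAuv hvsupp j0 huj0)
    · refine ⟨c, fun _ => ⟨?_, ?_, ?_⟩⟩
      · intro i hiF
        have h1 : 0 ≤ dotQ c (aQ i) :=
          hc (Sum.inl i) (by simp [Finset.mem_disjSum])
        have h2 : 0 ≤ dotQ c (-aQ i) :=
          hc (Sum.inr i) (by simp [Finset.mem_disjSum, hFs, hiF])
        rw [dotQ_neg_right'] at h2
        linarith
      · intro i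
        exact hc (Sum.inl i) (by simp [Finset.mem_disjSum])
      · have := hcb
        rw [dotQ_neg_right'] at this
        linarith
  -- Step C: combine the per-index certificates
  choose cQ hcQ using hB
  set Gs : Finset (Fin m) := Finset.univ.filter (· ∉ F) with hGs
  have hGsmem : ∀ j0 ∈ Gs, j0 ∉ F := fun j0 h => (Finset.mem_filter.mp h).2
  set cqf : Fin d → ℚ := fun k => ∑ j0 ∈ Gs, (dotQ (cQ j0) (aQ j0))⁻¹ * cQ j0 k with hcqf
  have hswap : ∀ i, ∑ k, cqf k * (A k i : ℚ)
      = ∑ j0 ∈ Gs, (dotQ (cQ j0) (aQ j0))⁻¹ * dotQ (cQ j0) (aQ i) := by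
    intro i
    simp only [hcqf]
    calc ∑ k, (∑ j0 ∈ Gs, (dotQ (cQ j0) (aQ j0))⁻¹ * cQ j0 k) * (A k i : ℚ)
        = ∑ k, ∑ j0 ∈ Gs, (dotQ (cQ j0) (aQ j0))⁻¹ * cQ j0 k * (A k i : ℚ) := by
          exact Finset.sum_congr rfl fun k _ => Finset.sum_mul _ _ _
      _ = ∑ j0 ∈ Gs, ∑ k, (dotQ (cQ j0) (aQ j0))⁻¹ * cQ j0 k * (A k i : ℚ) :=
          Finset.sum_comm
      _ = ∑ j0 ∈ Gs, (dotQ (cQ j0) (aQ j0))⁻¹ * dotQ (cQ j0) (aQ i) := by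
          refine Finset.sum_congr rfl fun j0 _ => ?_
          simp only [dotQ, Finset.mul_sum, haQ]
          exact Finset.sum_congr rfl fun k _ => by ring
  refine ⟨fun k => ((cqf k : ℚ) : ℝ), ?_, ?_⟩
  · intro i hiF
    have hq : ∑ k, cqf k * (A k i : ℚ) = 0 := by
      rw [hswap i]
      refine Finset.sum_eq_zero fun j0 hj0 => ?_
      rw [(hcQ j0 (hGsmem j0 hj0)).1 i hiF, mul_zero]
    have : ((∑ k, cqf k * (A k i : ℚ) : ℚ) : ℝ) = ∑ k, ((cqf k : ℚ) : ℝ) * (A k i : ℝ) := by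
      push_cast; ring_nf
    rw [← this, hq]
    norm_num
  · intro i hiF
    have hq : (1 : ℚ) ≤ ∑ k, cqf k * (A k i : ℚ) := by
      rw [hswap i]
      have hiGs : i ∈ Gs := Finset.mem_filter.mpr ⟨Finset.mem_univ i, hiF⟩
      have hterm : (dotQ (cQ i) (aQ i))⁻¹ * dotQ (cQ i) (aQ i) = 1 :=
        inv_mul_cancel₀ (ne_of_gt (hcQ i hiF).2.2)
      have hnn : ∀ j0 ∈ Gs, 0 ≤ (dotQ (cQ j0) (aQ j0))⁻¹ * dotQ (cQ j0) (aQ i) := by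
        intro j0 hj0
        exact mul_nonneg (inv_nonneg.mpr (le_of_lt (hcQ j0 (hGsmem j0 hj0)).2.2))
          ((hcQ j0 (hGsmem j0 hj0)).2.1 i)
      calc (1 : ℚ) = (dotQ (cQ i) (aQ i))⁻¹ * dotQ (cQ i) (aQ i) := hterm.symm
        _ ≤ ∑ j0 ∈ Gs, (dotQ (cQ j0) (aQ j0))⁻¹ * dotQ (cQ j0) (aQ i) :=
            Finset.single_le_sum hnn hiGs
    have : ((∑ k, cqf k * (A k i : ℚ) : ℚ) : ℝ) = ∑ k, ((cqf k : ℚ) : ℝ) * (A k i : ℝ) := by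
      push_cast; ring_nf
    rw [← this]
    exact_mod_cast hq
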